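/- In the two-point example, the time-inhomogeneous chain with deterministic kernel sequence P_{θ_n} (where P_θ(0,{1}) = P_θ(1,{0}) = θ), with θ_n ∈ (0,1/2], θ_n → 0, and Σ_n θ_n = ∞, is ergodic: for any starting point x, the law of X_n converges in total variation to π = (1/2,1/2). Explicitly, ||L(X_n | X_0 = x) − π|| = (1/2)·∏_{k=1}^{n}(1 − 2θ_k) → 0, since Σθ_k = ∞ forces the product to 0. Moreover this adaptive scheme satisfies Diminishing Adaptation (since θ_n → 0 implies sup_x ||P_{θ_{n+1}}(x,·) − P_{θ_n}(x,·)|| = |θ_{n+1} − θ_n| → 0) but fails Containment (since M_ε(x, θ_n) → ∞), hence by Theorem 3.3 it is in AdapFail despite being ergodic. -/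

import Mathlib

open MeasureTheory ProbabilityTheory Filter
open scoped ENNReal NNReal

noncomputable def tvDist {X : Type*} [MeasurableSpace X] (μ ν : Measure X) : ℝ :=
  ⨆ A : {s : Set X // MeasurableSet s}, |(μ A.1).toReal - (ν A.1).toReal|

noncomputable def kiter {X : Type*} [MeasurableSpace X] (P : Kernel X X) : ℕ → Kernel X X
  | 0 => Kernel.id
  | n+1 => P ∘ₖ kiter P n

noncomputable def Meps {X : Type*} [MeasurableSpace X] (P : Kernel X X) (π : Measure X)
    (ε : ℝ) (x : X) : ℕ∞ :=
  sInf ((↑) '' {n : ℕ | 1 ≤ n ∧ tvDist ((kiter P n) x) π ≤ ε})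

/-- The two-point kernel `P_θ` on `{0,1}` (modelled as `Bool`): flip with probability `θ`,
stay with probability `1 − θ`. -/
noncomputable def twoPtKernel (θ : ℝ) : Kernel Bool Bool :=
  ⟨fun x => ENNReal.ofReal (1 - θ) • Measure.dirac x + ENNReal.ofReal θ • Measure.dirac (!x),
   measurable_of_countable _⟩

/-- The uniform target `π = (1/2, 1/2)` on the two-point space. -/
noncomputable def twoPtUnif : Measure Bool :=
  (1 / 2 : ℝ≥0∞) • Measure.dirac false + (1 / 2 : ℝ≥0∞) • Measure.dirac true

/-- The inhomogeneous product `P_{θ_{m+1}} P_{θ_{m+2}} ⋯ P_{θ_{m+n}}`: the law of `n` steps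
of the time-inhomogeneous chain restarted at time `m`. -/
noncomputable def inhomFrom (θseq : ℕ → ℝ) (m : ℕ) : ℕ → Kernel Bool Bool
  | 0 => Kernel.id
  | n + 1 => twoPtKernel (θseq (m + n + 1)) ∘ₖ inhomFrom θseq m n

/-- `ε` convergence time of the inhomogeneous (adaptive) scheme restarted at time `m`
from state `x`. -/
noncomputable def MAinhom (θseq : ℕ → ℝ) (ε : ℝ) (x : Bool) (m : ℕ) : ℕ∞ :=
  sInf ((↑) '' {n : ℕ | 1 ≤ n ∧ tvDist ((inhomFrom θseq m n) x) twoPtUnif ≤ ε})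

/-! ### Auxiliary lemmas -/

lemma measBool (A : Set Bool) : MeasurableSet A := trivial

lemma bool_set_cases (A : Set Bool) : A = ∅ ∨ A = {false} ∨ A = {true} ∨ A = Set.univ := by
  by_cases hf : false ∈ A <;> by_cases ht : true ∈ A
  · right; right; right; ext b; cases b <;> simp [hf, ht]
  · right; left; ext b; cases b <;> simp [hf, ht]
  · right; right; left; ext b; cases b <;> simp [hf, ht]
  · left; ext b; cases b <;> simp [hf, ht]

lemma measure_univ_eq {μ : Measure Bool} : μ Set.univ = μ {false} + μ {true} := by
  have h : (Set.univ : Set Bool) = {false} ∪ {true} := by ext b; cases b <;> simp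
  rw [h, measure_union (by simp) (measBool _)]

/-- abstract "two-point measure with mass `a` at `false`" predicate -/
structure TP (μ : Measure Bool) (a : ℝ) : Prop where
  h0 : 0 ≤ a
  h1 : a ≤ 1
  hf : μ {false} = ENNReal.ofReal a
  ht : μ {true} = ENNReal.ofReal (1 - a)

lemma TP.univ {μ : Measure Bool} {a : ℝ} (h : TP μ a) : μ Set.univ = 1 := by
  rw [measure_univ_eq, h.hf, h.ht, ← ENNReal.ofReal_add h.h0 (by linarith [h.h1])]
  norm_num

lemma TP.tv {μ ν : Measure Bool} {a b : ℝ} (hμ : TP μ a) (hν : TP ν b) :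
    tvDist μ ν = |a - b| := by
  have key : ∀ A : Set Bool, |(μ A).toReal - (ν A).toReal| = 0 ∨
      |(μ A).toReal - (ν A).toReal| = |a - b| := by
    intro A
    rcases bool_set_cases A with h | h | h | h <;> subst h
    · left; simp
    · right; rw [hμ.hf, hν.hf, ENNReal.toReal_ofReal hμ.h0, ENNReal.toReal_ofReal hν.h0]
    · right
      rw [hμ.ht, hν.ht, ENNReal.toReal_ofReal (by linarith [hμ.h1]),
        ENNReal.toReal_ofReal (by linarith [hν.h1]),
        show (1 - a) - (1 - b) = -(a - b) by ring, abs_neg]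
    · left; rw [hμ.univ, hν.univ]; simp
  have hub : ∀ A : Set Bool, |(μ A).toReal - (ν A).toReal| ≤ |a - b| := by
    intro A
    rcases key A with h | h
    · rw [h]; exact abs_nonneg _
    · rw [h]
  unfold tvDist
  apply le_antisymm
  · exact ciSup_le fun A => hub A.1
  · refine le_ciSup_of_le ⟨|a - b|, ?_⟩ ⟨{false}, measBool _⟩ ?_
    · rintro r ⟨A, rfl⟩; exact hub A.1
    · rw [hμ.hf, hν.hf, ENNReal.toReal_ofReal hμ.h0, ENNReal.toReal_ofReal hν.h0]

lemma ofReal_half : ENNReal.ofReal (1/2 : ℝ) = 1/2 := by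
  rw [ENNReal.ofReal_div_of_pos (by norm_num)]; norm_num

lemma TP.unif : TP twoPtUnif (1/2) := by
  refine ⟨by norm_num, by norm_num, ?_, ?_⟩
  · show ((1 / 2 : ℝ≥0∞) • Measure.dirac false + (1 / 2 : ℝ≥0∞) • Measure.dirac true) {false} = _
    rw [ofReal_half]; simp [Measure.dirac_apply]
  · show ((1 / 2 : ℝ≥0∞) • Measure.dirac false + (1 / 2 : ℝ≥0∞) • Measure.dirac true) {true} = _
    rw [show (1:ℝ) - 1/2 = 1/2 by norm_num, ofReal_half]; simp [Measure.dirac_apply]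

lemma TP.dirac (x : Bool) : TP (Measure.dirac x) (if x then 0 else 1) := by
  cases x
  · exact ⟨by norm_num, by norm_num, by simp [Measure.dirac_apply], by simp [Measure.dirac_apply]⟩
  · exact ⟨by norm_num, by norm_num, by simp [Measure.dirac_apply], by simp [Measure.dirac_apply]⟩

lemma twoPtKernel_apply (θ : ℝ) (hθ0 : 0 ≤ θ) (hθ1 : θ ≤ 1) (x : Bool) :
    TP ((twoPtKernel θ) x) (if x then θ else 1 - θ) := by
  cases x
  · refine ⟨by simp; linarith, by simp; linarith, ?_, ?_⟩
    · show (ENNReal.ofReal (1-θ) • Measure.dirac false + ENNReal.ofReal θ • Measure.dirac true) {false} = _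
      simp [Measure.dirac_apply]
    · show (ENNReal.ofReal (1-θ) • Measure.dirac false + ENNReal.ofReal θ • Measure.dirac true) {true} = _
      simp [Measure.dirac_apply, sub_sub_cancel]
  · refine ⟨by simp; linarith, by simp; linarith, ?_, ?_⟩
    · show (ENNReal.ofReal (1-θ) • Measure.dirac true + ENNReal.ofReal θ • Measure.dirac false) {false} = _
      simp [Measure.dirac_apply]
    · show (ENNReal.ofReal (1-θ) • Measure.dirac true + ENNReal.ofReal θ • Measure.dirac false) {true} = _
      simp [Measure.dirac_apply]

lemma TP.bind {μ : Measure Bool} {a θ : ℝ} (h : TP μ a) (hθ0 : 0 ≤ θ) (hθ1 : θ ≤ 1) :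
    TP (μ.bind (twoPtKernel θ)) ((1-θ)*a + θ*(1-a)) := by
  have happ : ∀ (s : Set Bool), (μ.bind (twoPtKernel θ)) s
      = (twoPtKernel θ) true s * μ {true} + (twoPtKernel θ) false s * μ {false} := by
    intro s
    rw [Measure.bind_apply (measBool _) (Kernel.measurable _).aemeasurable,
      lintegral_fintype]
    simp [Fintype.sum_bool]
  have ktt := twoPtKernel_apply θ hθ0 hθ1 true
  have ktf := twoPtKernel_apply θ hθ0 hθ1 false
  rw [if_pos rfl] at ktt
  rw [if_neg Bool.false_ne_true] at ktf
  constructor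
  · nlinarith [h.h0, h.h1]
  · nlinarith [h.h0, h.h1]
  · rw [happ, ktt.hf, ktf.hf, h.hf, h.ht,
      ← ENNReal.ofReal_mul hθ0, ← ENNReal.ofReal_mul (by linarith),
      ← ENNReal.ofReal_add (by nlinarith [h.h0, h.h1]) (by nlinarith [h.h0, h.h1])]
    congr 1; ring
  · rw [happ, ktt.ht, ktf.ht, h.hf, h.ht,
      ← ENNReal.ofReal_mul (by linarith), ← ENNReal.ofReal_mul (by linarith),
      ← ENNReal.ofReal_add (by nlinarith [h.h0, h.h1]) (by nlinarith [h.h0, h.h1])]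
    congr 1; ring

/-- structure of the homogeneous `n`-step law -/
lemma kiter_struct (θ : ℝ) (h0 : 0 ≤ θ) (h2 : θ ≤ 1/2) (x : Bool) :
    ∀ n : ℕ, ∃ a : ℝ, TP ((kiter (twoPtKernel θ) n) x) a ∧
      |a - 1/2| = (1/2) * (1 - 2*θ)^n := by
  intro n
  induction n with
  | zero =>
    refine ⟨if x then 0 else 1, ?_, ?_⟩
    · show TP (Kernel.id x) _
      rw [Kernel.id_apply]; exact TP.dirac x
    · cases x <;> norm_num
  | succ n ih =>
    obtain ⟨a, hTP, habs⟩ := ih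
    refine ⟨(1-θ)*a + θ*(1-a), ?_, ?_⟩
    · show TP ((twoPtKernel θ ∘ₖ kiter (twoPtKernel θ) n) x) _
      rw [Kernel.comp_apply]
      exact hTP.bind h0 (by linarith)
    · rw [show (1-θ)*a + θ*(1-a) - 1/2 = (1-2*θ)*(a-1/2) by ring, abs_mul,
        abs_of_nonneg (by linarith : (0:ℝ) ≤ 1-2*θ), habs, pow_succ]
      ring

/-- structure of the inhomogeneous `n`-step law started at time `m` -/
lemma inhom_struct (θseq : ℕ → ℝ) (hθ : ∀ n, θseq n ∈ Set.Ioc (0 : ℝ) (1 / 2))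
    (m : ℕ) (x : Bool) :
    ∀ n : ℕ, ∃ a : ℝ, TP ((inhomFrom θseq m n) x) a ∧
      |a - 1/2| = (1/2) * ∏ k ∈ Finset.Icc (m+1) (m+n), (1 - 2*θseq k) := by
  intro n
  induction n with
  | zero =>
    refine ⟨if x then 0 else 1, ?_, ?_⟩
    · show TP (Kernel.id x) _
      rw [Kernel.id_apply]; exact TP.dirac x
    · rw [show m + 0 = m from rfl, Finset.Icc_eq_empty (by omega), Finset.prod_empty]
      cases x <;> norm_num
  | succ n ih =>
    obtain ⟨a, hTP, habs⟩ := ih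
    have hk := hθ (m+n+1)
    refine ⟨(1-θseq (m+n+1))*a + θseq (m+n+1)*(1-a), ?_, ?_⟩
    · show TP ((twoPtKernel (θseq (m+n+1)) ∘ₖ inhomFrom θseq m n) x) _
      rw [Kernel.comp_apply]
      exact hTP.bind hk.1.le (by linarith [hk.2])
    · rw [show (1-θseq (m+n+1))*a + θseq (m+n+1)*(1-a) - 1/2
          = (1-2*θseq (m+n+1))*(a-1/2) by ring, abs_mul,
        abs_of_nonneg (by linarith [hk.2] : (0:ℝ) ≤ 1-2*θseq (m+n+1)), habs,
        show m + (n+1) = (m+n) + 1 by omega,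
        Finset.prod_Icc_succ_top (by omega : m+1 ≤ m+n+1)]
      ring

/-- in the two-point example with deterministic parameters `θ_n ∈ (0,1/2]`,
`θ_n → 0`, `Σ θ_n = ∞`: the inhomogeneous chain is ergodic with
`‖L(X_n | X_0 = x) − π‖ = (1/2)·∏_{k=1}^n (1 − 2θ_k) → 0`; Diminishing Adaptation holds;
Containment fails (`M_ε(x, θ_n) → ∞` deterministically); and the scheme is in AdapFail. -/
theorem twoPt_inhomogeneous_ergodic_DA_noContainment_AdapFail
    (θseq : ℕ → ℝ) (hθ : ∀ n, θseq n ∈ Set.Ioc (0 : ℝ) (1 / 2))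
    (hθ0 : Tendsto θseq atTop (nhds 0))
    (hdiv : Tendsto (fun n => ∑ k ∈ Finset.range n, θseq k) atTop atTop) :
    -- explicit TV formula and ergodicity
    (∀ (x : Bool) (n : ℕ), tvDist ((inhomFrom θseq 0 n) x) twoPtUnif
        = (1 / 2) * ∏ k ∈ Finset.Icc 1 n, (1 - 2 * θseq k)) ∧
    (∀ x : Bool,
      Tendsto (fun n => tvDist ((inhomFrom θseq 0 n) x) twoPtUnif) atTop (nhds 0)) ∧
    -- Diminishing Adaptation
    Tendsto (fun n => ⨆ x : Bool,
        tvDist ((twoPtKernel (θseq (n + 1))) x) ((twoPtKernel (θseq n)) x))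
      atTop (nhds 0) ∧
    -- Containment fails: the frozen convergence times blow up deterministically
    (∀ ε : ℝ, 0 < ε → ε < 1 / 2 → ∀ (x : Bool) (N : ℕ),
      ∀ᶠ n in atTop, (N : ℕ∞) < Meps (twoPtKernel (θseq n)) twoPtUnif ε x) ∧
    -- hence (Theorem 3.3) the scheme is in AdapFail, despite being ergodic
    (∀ ε : ℝ, 0 < ε → ε < 1 / 2 → ∀ xstar : Bool, ∃ δ : ℝ≥0∞, 0 < δ ∧
      ∀ M : ℕ, δ ≤ Filter.atTop.limsup (fun n =>
        (inhomFrom θseq 0 n) xstar {x | (M : ℕ∞) < MAinhom θseq ε x n})) := by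
  -- Part 1 : the explicit formula
  have formula : ∀ (x : Bool) (n : ℕ), tvDist ((inhomFrom θseq 0 n) x) twoPtUnif
      = (1 / 2) * ∏ k ∈ Finset.Icc 1 n, (1 - 2 * θseq k) := by
    intro x n
    obtain ⟨a, hTP, habs⟩ := inhom_struct θseq hθ 0 x n
    rw [hTP.tv TP.unif, habs]
    norm_num
  refine ⟨formula, ?_, ?_, ?_, ?_⟩
  -- Part 2 : ergodicity
  · intro x
    have hf : ∀ n, tvDist ((inhomFrom θseq 0 n) x) twoPtUnif
        = (1 / 2) * ∏ k ∈ Finset.Icc 1 n, (1 - 2 * θseq k) := formula x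
    rw [tendsto_congr hf]
    have hS : Tendsto (fun n => ∑ k ∈ Finset.Icc 1 n, θseq k) atTop atTop := by
      have h1 : Tendsto (fun n => ∑ k ∈ Finset.range (n+1), θseq k) atTop atTop :=
        hdiv.comp (tendsto_add_atTop_nat 1)
      have heq : ∀ n, ∑ k ∈ Finset.Icc 1 n, θseq k
          = (∑ k ∈ Finset.range (n+1), θseq k) + (-θseq 0) := by
        intro n
        rw [← Finset.Ico_add_one_right_eq_Icc, Finset.sum_Ico_eq_sub _ (by omega)]
        simp [sub_eq_add_neg]
      rw [tendsto_congr heq]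
      exact tendsto_atTop_add_const_right atTop _ h1
    have hexp : Tendsto (fun n => (1/2) * Real.exp ((-2) * ∑ k ∈ Finset.Icc 1 n, θseq k))
        atTop (nhds 0) := by
      have h2 : Tendsto (fun n => (-2 : ℝ) * ∑ k ∈ Finset.Icc 1 n, θseq k) atTop atBot :=
        hS.const_mul_atTop_of_neg (by norm_num)
      have h3 := Real.tendsto_exp_atBot.comp h2
      have h4 := h3.const_mul (1/2 : ℝ)
      simpa using h4
    apply squeeze_zero (g := fun n => (1/2) * Real.exp ((-2) * ∑ k ∈ Finset.Icc 1 n, θseq k))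
      ?_ ?_ hexp
    · intro n
      have : (0:ℝ) ≤ ∏ k ∈ Finset.Icc 1 n, (1 - 2 * θseq k) :=
        Finset.prod_nonneg fun k _ => by linarith [(hθ k).2]
      linarith
    · intro n
      have hle : ∏ k ∈ Finset.Icc 1 n, (1 - 2 * θseq k)
          ≤ Real.exp ((-2) * ∑ k ∈ Finset.Icc 1 n, θseq k) := by
        calc ∏ k ∈ Finset.Icc 1 n, (1 - 2 * θseq k)
            ≤ ∏ k ∈ Finset.Icc 1 n, Real.exp (-(2 * θseq k)) := by
              refine Finset.prod_le_prod (fun k _ => by linarith [(hθ k).2]) (fun k _ => ?_)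
              have := Real.add_one_le_exp (-(2 * θseq k))
              linarith
          _ = Real.exp (∑ k ∈ Finset.Icc 1 n, -(2 * θseq k)) := (Real.exp_sum _ _).symm
          _ = Real.exp ((-2) * ∑ k ∈ Finset.Icc 1 n, θseq k) := by
              congr 1
              rw [Finset.mul_sum]
              exact Finset.sum_congr rfl fun k _ => by ring
      linarith
  -- Part 3 : Diminishing Adaptation
  · have heq : ∀ n, (⨆ x : Bool, tvDist ((twoPtKernel (θseq (n + 1))) x)
        ((twoPtKernel (θseq n)) x)) = |θseq (n+1) - θseq n| := by
      intro n
      have h1 : ∀ k, (0:ℝ) ≤ θseq k := fun k => (hθ k).1.le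
      have h2 : ∀ k, θseq k ≤ 1 := fun k => (hθ k).2.trans (by norm_num)
      have keyx : ∀ x : Bool, tvDist ((twoPtKernel (θseq (n + 1))) x)
          ((twoPtKernel (θseq n)) x) = |θseq (n+1) - θseq n| := by
        intro x
        rw [(twoPtKernel_apply _ (h1 _) (h2 _) x).tv (twoPtKernel_apply _ (h1 _) (h2 _) x)]
        cases x
        · rw [if_neg Bool.false_ne_true, if_neg Bool.false_ne_true,
            show 1 - θseq (n+1) - (1 - θseq n) = -(θseq (n+1) - θseq n) by ring, abs_neg]
        · rw [if_pos rfl, if_pos rfl]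
      calc (⨆ x : Bool, tvDist ((twoPtKernel (θseq (n + 1))) x) ((twoPtKernel (θseq n)) x))
          = ⨆ _x : Bool, |θseq (n+1) - θseq n| := iSup_congr keyx
        _ = |θseq (n+1) - θseq n| := ciSup_const
    rw [tendsto_congr heq]
    have h5 : Tendsto (fun n => θseq (n+1) - θseq n) atTop (nhds 0) := by
      have := (hθ0.comp (tendsto_add_atTop_nat 1)).sub hθ0
      simpa using this
    simpa using h5.abs
  -- Part 4 : Containment fails
  · intro ε hε hε2 x N
    have hpow : Tendsto (fun n => (1 - 2*θseq n)^(N+1)) atTop (nhds 1) := by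
      have h1 : Tendsto (fun n => 1 - 2*θseq n) atTop (nhds (1 - 2*0)) :=
        tendsto_const_nhds.sub (hθ0.const_mul 2)
      have h2 := h1.pow (N+1)
      norm_num at h2
      exact h2
    have hev := hpow.eventually (eventually_gt_nhds (show 2*ε < 1 by linarith))
    filter_upwards [hev] with n hn
    have ht0 : (0:ℝ) ≤ 1 - 2*θseq n := by linarith [(hθ n).2]
    have ht1 : 1 - 2*θseq n ≤ 1 := by linarith [(hθ n).1]
    have key : ∀ b ∈ ((↑) '' {m : ℕ | 1 ≤ m ∧
        tvDist ((kiter (twoPtKernel (θseq n)) m) x) twoPtUnif ≤ ε} : Set ℕ∞),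
        ((N:ℕ∞)+1) ≤ b := by
      rintro b ⟨m, ⟨h1m, htv⟩, rfl⟩
      obtain ⟨a, hTP, habs⟩ := kiter_struct (θseq n) (hθ n).1.le (hθ n).2 x m
      rw [hTP.tv TP.unif, habs] at htv
      have hle : ((N:ℕ∞)+1) ≤ ((m:ℕ)) ↔ N+1 ≤ m := by
        rw [show ((N:ℕ∞)+1) = ((N+1 : ℕ) : ℕ∞) by push_cast; ring]
        exact_mod_cast Nat.cast_le
      rw [hle]
      by_contra hcon
      push_neg at hcon
      have : (1 - 2*θseq n)^(N+1) ≤ (1 - 2*θseq n)^m :=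
        pow_le_pow_of_le_one ht0 ht1 (by omega)
      linarith
    have hsinf : ((N:ℕ∞)+1) ≤ Meps (twoPtKernel (θseq n)) twoPtUnif ε x := le_sInf key
    refine lt_of_lt_of_le ?_ hsinf
    rw [show ((N:ℕ∞)+1) = ((N+1 : ℕ) : ℕ∞) by push_cast; ring]
    exact_mod_cast Nat.lt_succ_self N
  -- Part 5 : AdapFail
  · intro ε hε hε2 xstar
    refine ⟨1, by norm_num, ?_⟩
    intro M
    obtain ⟨c, hc0, hc2, hcε⟩ : ∃ c : ℝ, 0 < c ∧ c ≤ 1/2 ∧ 2*ε < (1-2*c)^(M+1) := by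
      have hcont : Tendsto (fun c : ℝ => (1-2*c)^(M+1)) (nhdsWithin 0 (Set.Ioi 0)) (nhds 1) := by
        have h1 : Tendsto (fun c : ℝ => (1-2*c)^(M+1)) (nhds 0) (nhds ((1-2*0)^(M+1))) :=
          ((continuous_const.sub (continuous_const.mul continuous_id)).pow (M+1)).tendsto 0
        norm_num at h1
        exact h1.mono_left nhdsWithin_le_nhds
      have h1 : ∀ᶠ c in nhdsWithin (0:ℝ) (Set.Ioi 0), 2*ε < (1-2*c)^(M+1) :=
        hcont.eventually (eventually_gt_nhds (by linarith))
      have h2 : ∀ᶠ c in nhdsWithin (0:ℝ) (Set.Ioi 0), c < 1/2 :=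
        eventually_nhdsWithin_of_eventually_nhds (eventually_lt_nhds (by norm_num))
      have h3 : ∀ᶠ c in nhdsWithin (0:ℝ) (Set.Ioi 0), c ∈ Set.Ioi (0:ℝ) :=
        eventually_mem_nhdsWithin
      obtain ⟨c, hca, hcb, hcc⟩ := (h1.and (h2.and h3)).exists
      exact ⟨c, hcc, hcb.le, hca⟩
    have hev : ∀ᶠ K in atTop, θseq K < c := hθ0.eventually (eventually_lt_nhds hc0)
    obtain ⟨K, hK⟩ := eventually_atTop.mp hev
    have hset : ∀ᶠ n in atTop,
        ((inhomFrom θseq 0 n) xstar) {x | (M:ℕ∞) < MAinhom θseq ε x n} = 1 := by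
      filter_upwards [eventually_ge_atTop K] with n hn
      have huniv : {x : Bool | (M:ℕ∞) < MAinhom θseq ε x n} = Set.univ := by
        ext x
        simp only [Set.mem_setOf_eq, Set.mem_univ, iff_true]
        have key : ∀ b ∈ ((↑) '' {m : ℕ | 1 ≤ m ∧
            tvDist ((inhomFrom θseq n m) x) twoPtUnif ≤ ε} : Set ℕ∞),
            ((M:ℕ∞)+1) ≤ b := by
          rintro b ⟨m, ⟨h1m, htv⟩, rfl⟩
          obtain ⟨a, hTP, habs⟩ := inhom_struct θseq hθ n x m
          rw [hTP.tv TP.unif, habs] at htv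
          have hle : ((M:ℕ∞)+1) ≤ ((m:ℕ)) ↔ M+1 ≤ m := by
            rw [show ((M:ℕ∞)+1) = ((M+1 : ℕ) : ℕ∞) by push_cast; ring]
            exact_mod_cast Nat.cast_le
          rw [hle]
          by_contra hcon
          push_neg at hcon
          have hprod : (1-2*c)^m ≤ ∏ k ∈ Finset.Icc (n+1) (n+m), (1 - 2*θseq k) := by
            have hcard : (Finset.Icc (n+1) (n+m)).card = m := by
              rw [Nat.card_Icc]; omega
            calc (1-2*c)^m = ∏ _k ∈ Finset.Icc (n+1) (n+m), (1-2*c) := by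
                  rw [Finset.prod_const, hcard]
              _ ≤ ∏ k ∈ Finset.Icc (n+1) (n+m), (1 - 2*θseq k) := by
                  refine Finset.prod_le_prod (fun k _ => by linarith) (fun k hk => ?_)
                  have hk1 : n+1 ≤ k := (Finset.mem_Icc.mp hk).1
                  have : θseq k < c := hK k (by omega)
                  linarith
          have h2 : (1-2*c)^(M+1) ≤ (1-2*c)^m :=
            pow_le_pow_of_le_one (by linarith) (by linarith) (by omega)
          linarith
        have hsinf : ((M:ℕ∞)+1) ≤ MAinhom θseq ε x n := le_sInf key
        refine lt_of_lt_of_le ?_ hsinf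
        rw [show ((M:ℕ∞)+1) = ((M+1 : ℕ) : ℕ∞) by push_cast; ring]
        exact_mod_cast Nat.lt_succ_self M
      rw [huniv]
      obtain ⟨a, hTP, _⟩ := inhom_struct θseq hθ 0 xstar n
      exact hTP.univ
    have hlim : Filter.atTop.limsup (fun n =>
        (inhomFrom θseq 0 n) xstar {x | (M : ℕ∞) < MAinhom θseq ε x n}) = 1 := by
      rw [limsup_congr hset]
      exact limsup_const 1
    rw [hlim]
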